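/- arXiv:1601.05006 — 2 statements merged into one kernel-verified Lean document; each statement's English description precedes it below -/
import Mathlib

section
/- Suppose a_1 = ... = a_ℓ = 0 and a_{ℓ+1} ≠ 0, and let λ = ⌊ℓ/2⌋. Then for k ≤ λ and l > λ, the functions J_k = (x_1⋯x_{2k−1})/(x_2⋯x_{2k}) and F_l = v_{2l} I_l (n even) Poisson-commute: {J_k, F_l} = 0. -/
open Finset Real

/-- partial derivative of `f` in the `i`-th coordinate direction -/
noncomputable def pd {n : ℕ} (i : Fin n) (f : (Fin n → ℝ) → ℝ) (x : Fin n → ℝ) : ℝ :=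
  fderiv ℝ f x (Pi.single i 1)

/-- the quadratic Poisson bracket `{x_i,x_j} = x_i x_j` for `i < j` -/
noncomputable def pb {n : ℕ} (f g : (Fin n → ℝ) → ℝ) (x : Fin n → ℝ) : ℝ :=
  ∑ i : Fin n, ∑ j : Fin n,
    if i < j then x i * x j * (pd i f x * pd j g x - pd j f x * pd i g x) else 0

/-- `v a j x = a_1 x_1 + ⋯ + a_j x_j` (sum of the first `j` terms, 1-based). -/
noncomputable def v {n : ℕ} (a : Fin n → ℝ) (j : ℕ) (x : Fin n → ℝ) : ℝ :=
  ∑ k : Fin n, if (k : ℕ) < j then a k * x k else 0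

/-- right-hand side of the generalized Lotka–Volterra system -/
noncomputable def rhs {n : ℕ} (a : Fin n → ℝ) (x : Fin n → ℝ) (i : Fin n) : ℝ :=
  x i * ((∑ j : Fin n, if i < j then a j * x j else 0)
        - ∑ j : Fin n, if j < i then a j * x j else 0)

/-- `J k = (x_1 x_3 ⋯ x_{2k-1})/(x_2 x_4 ⋯ x_{2k})` (1-based indexing). -/
noncomputable def J {n : ℕ} (k : ℕ) (x : Fin n → ℝ) : ℝ :=
  ∏ m : Fin n, if (m : ℕ) < 2 * k then
    (if (m : ℕ) % 2 = 0 then x m else (x m)⁻¹) else 1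

/-- `I k = (x_{2k+2} x_{2k+4} ⋯ x_n)/(x_{2k+1} x_{2k+3} ⋯ x_{n-1})` (1-based, n even). -/
noncomputable def Ifun {n : ℕ} (k : ℕ) (x : Fin n → ℝ) : ℝ :=
  ∏ m : Fin n, if 2 * k ≤ (m : ℕ) then
    (if (m : ℕ) % 2 = 1 then x m else (x m)⁻¹) else 1

/-! ### Auxiliary lemmas -/

lemma pd_eq_fderiv {n : ℕ} {f : (Fin n → ℝ) → ℝ} {L : (Fin n → ℝ) →L[ℝ] ℝ}
    {x : Fin n → ℝ} (h : HasFDerivAt f L x) (i : Fin n) :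
    fderiv ℝ f x (Pi.single i 1) = L (Pi.single i 1) := by
  rw [h.fderiv]

lemma hasFDerivAt_coord {n : ℕ} (m : Fin n) (φ : ℝ → ℝ) (d : ℝ) (x : Fin n → ℝ)
    (h : HasDerivAt φ d (x m)) :
    HasFDerivAt (fun y : Fin n → ℝ => φ (y m))
      (d • (ContinuousLinearMap.proj m : (Fin n → ℝ) →L[ℝ] ℝ)) x := by
  have h1 := h.hasFDerivAt
  have h2 := (ContinuousLinearMap.proj m : (Fin n → ℝ) →L[ℝ] ℝ).hasFDerivAt (x := x)
  have := h1.comp x h2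
  exact this.congr_fderiv (by
  ext y
  simp [mul_comm])

lemma hasFDerivAt_prod_coord {n : ℕ} (φ : Fin n → ℝ → ℝ) (d : Fin n → ℝ)
    (x : Fin n → ℝ) (h : ∀ m, HasDerivAt (φ m) (d m) (x m)) :
    HasFDerivAt (fun y : Fin n → ℝ => ∏ m, φ m (y m))
      (∑ m : Fin n, (∏ j ∈ univ.erase m, φ j (x j)) •
        (d m • (ContinuousLinearMap.proj m : (Fin n → ℝ) →L[ℝ] ℝ))) x := by
  exact HasFDerivAt.finset_prod (fun m _ => hasFDerivAt_coord m (φ m) (d m) x (h m))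

lemma fderiv_prod_coord {n : ℕ} (φ : Fin n → ℝ → ℝ) (d : Fin n → ℝ)
    (x : Fin n → ℝ) (h : ∀ m, HasDerivAt (φ m) (d m) (x m)) (i : Fin n) :
    fderiv ℝ (fun y : Fin n → ℝ => ∏ m, φ m (y m)) x (Pi.single i 1)
      = (∏ j ∈ univ.erase i, φ j (x j)) * d i := by
  rw [pd_eq_fderiv (hasFDerivAt_prod_coord φ d x h) i]
  rw [ContinuousLinearMap.sum_apply]
  rw [Finset.sum_eq_single i]
  · simp
  · intro b _ hb
    simp [Pi.single_eq_of_ne hb]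
  · simp

lemma hasDerivAt_Jphi {n : ℕ} (k : ℕ) (x : Fin n → ℝ) (hx : ∀ i, x i ≠ 0) (m : Fin n) :
    HasDerivAt (fun t : ℝ => if (m : ℕ) < 2 * k then
        (if (m : ℕ) % 2 = 0 then t else t⁻¹) else 1)
      (if (m : ℕ) < 2 * k then
        (if (m : ℕ) % 2 = 0 then 1 else -((x m) ^ 2)⁻¹) else 0) (x m) := by
  by_cases h1 : (m : ℕ) < 2 * k <;> simp only [h1, if_true, if_false]
  · by_cases h2 : (m : ℕ) % 2 = 0 <;> simp only [h2, if_true, if_false]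
    · exact hasDerivAt_id' (x m)
    · exact hasDerivAt_inv (hx m)
  · exact hasDerivAt_const _ _

lemma pd_J {n : ℕ} (k : ℕ) (x : Fin n → ℝ) (hx : ∀ i, x i ≠ 0) (i : Fin n) :
    pd i (J k) x = (∏ j ∈ univ.erase i, if (j : ℕ) < 2 * k then
        (if (j : ℕ) % 2 = 0 then x j else (x j)⁻¹) else 1)
      * (if (i : ℕ) < 2 * k then
        (if (i : ℕ) % 2 = 0 then 1 else -((x i) ^ 2)⁻¹) else 0) := by
  exact fderiv_prod_coord _ _ x (hasDerivAt_Jphi k x hx) i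

lemma hasDerivAt_Iphi {n : ℕ} (l : ℕ) (x : Fin n → ℝ) (hx : ∀ i, x i ≠ 0) (m : Fin n) :
    HasDerivAt (fun t : ℝ => if 2 * l ≤ (m : ℕ) then
        (if (m : ℕ) % 2 = 1 then t else t⁻¹) else 1)
      (if 2 * l ≤ (m : ℕ) then
        (if (m : ℕ) % 2 = 1 then 1 else -((x m) ^ 2)⁻¹) else 0) (x m) := by
  by_cases h1 : 2 * l ≤ (m : ℕ) <;> simp only [h1, if_true, if_false]
  · by_cases h2 : (m : ℕ) % 2 = 1 <;> simp only [h2, if_true, if_false]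
    · exact hasDerivAt_id' (x m)
    · exact hasDerivAt_inv (hx m)
  · exact hasDerivAt_const _ _

lemma hasFDerivAt_Ifun {n : ℕ} (l : ℕ) (x : Fin n → ℝ) (hx : ∀ i, x i ≠ 0) :
    HasFDerivAt (Ifun l)
      (∑ m : Fin n, (∏ j ∈ univ.erase m, if 2 * l ≤ (j : ℕ) then
          (if (j : ℕ) % 2 = 1 then x j else (x j)⁻¹) else 1) •
        ((if 2 * l ≤ (m : ℕ) then
          (if (m : ℕ) % 2 = 1 then 1 else -((x m) ^ 2)⁻¹) else 0) •
          (ContinuousLinearMap.proj m : (Fin n → ℝ) →L[ℝ] ℝ))) x := by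
  exact hasFDerivAt_prod_coord _ _ x (hasDerivAt_Iphi l x hx)

lemma pd_Ifun {n : ℕ} (l : ℕ) (x : Fin n → ℝ) (hx : ∀ i, x i ≠ 0) (i : Fin n) :
    pd i (Ifun l) x = (∏ j ∈ univ.erase i, if 2 * l ≤ (j : ℕ) then
        (if (j : ℕ) % 2 = 1 then x j else (x j)⁻¹) else 1)
      * (if 2 * l ≤ (i : ℕ) then
        (if (i : ℕ) % 2 = 1 then 1 else -((x i) ^ 2)⁻¹) else 0) := by
  exact fderiv_prod_coord _ _ x (hasDerivAt_Iphi l x hx) i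

lemma hasFDerivAt_v {n : ℕ} (a : Fin n → ℝ) (c : ℕ) (x : Fin n → ℝ) :
    HasFDerivAt (v a c)
      (∑ m : Fin n, (if (m : ℕ) < c then a m else 0) •
        (ContinuousLinearMap.proj m : (Fin n → ℝ) →L[ℝ] ℝ)) x := by
  have : ∀ m : Fin n, HasFDerivAt (fun y : Fin n → ℝ => if (m : ℕ) < c then a m * y m else 0)
      ((if (m : ℕ) < c then a m else 0) •
        (ContinuousLinearMap.proj m : (Fin n → ℝ) →L[ℝ] ℝ)) x := by
    intro m
    by_cases h1 : (m : ℕ) < c <;> simp only [h1, if_true, if_false]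
    · exact hasFDerivAt_coord m (fun t => a m * t) (a m) x
        (by simpa using (hasDerivAt_id (x m)).const_mul (a m))
    · simpa using hasFDerivAt_const (0:ℝ) x
  exact HasFDerivAt.fun_sum (fun m _ => this m)

lemma pd_v {n : ℕ} (a : Fin n → ℝ) (c : ℕ) (x : Fin n → ℝ) (i : Fin n) :
    pd i (v a c) x = if (i : ℕ) < c then a i else 0 := by
  rw [pd, pd_eq_fderiv (hasFDerivAt_v a c x) i, ContinuousLinearMap.sum_apply]
  rw [Finset.sum_eq_single i]
  · by_cases h : (i : ℕ) < c <;> simp [h]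
  · intro b _ hb
    by_cases h : (b : ℕ) < c <;> simp [h, Pi.single_eq_of_ne hb]
  · simp

/-- sign of `x i ∂_i J_k / J_k` -/
noncomputable def sgnJ (k i : ℕ) : ℝ :=
  if i < 2 * k then (if i % 2 = 0 then 1 else -1) else 0

lemma alt_sum (K : ℕ) :
    ∑ i ∈ Finset.range (2 * K), (if i % 2 = 0 then (1:ℝ) else -1) = 0 := by
  induction K with
  | zero => simp
  | succ K ih =>
    rw [show 2 * (K + 1) = 2 * K + 1 + 1 by ring, Finset.sum_range_succ,
      Finset.sum_range_succ, ih]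
    have h1 : (2 * K) % 2 = 0 := by omega
    have h2 : (2 * K + 1) % 2 = 1 := by omega
    simp [h1, h2]

lemma sgnJ_sum (k n : ℕ) (h : 2 * k ≤ n) : ∑ i : Fin n, sgnJ k (i : ℕ) = 0 := by
  rw [Fin.sum_univ_eq_sum_range (fun i => sgnJ k i) n]
  rw [← Finset.sum_subset (Finset.range_subset_range.mpr h)
    (fun y _ hy => by
      rw [Finset.mem_range] at hy
      simp [sgnJ, hy])]
  rw [show (Finset.range (2*k)).sum (sgnJ k)
      = ∑ i ∈ Finset.range (2*k), (if i % 2 = 0 then (1:ℝ) else -1) from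
    Finset.sum_congr rfl (fun i hi => by
      rw [Finset.mem_range] at hi
      simp [sgnJ, hi])]
  exact alt_sum k

lemma pd_mul' {n : ℕ} {f g : (Fin n → ℝ) → ℝ} {Lf Lg : (Fin n → ℝ) →L[ℝ] ℝ}
    {x : Fin n → ℝ} (hf : HasFDerivAt f Lf x) (hg : HasFDerivAt g Lg x) (i : Fin n) :
    pd i (fun y => f y * g y) x = f x * pd i g x + g x * pd i f x := by
  rw [pd, pd, pd, (hf.fun_mul hg).fderiv, hf.fderiv, hg.fderiv]
  simp

lemma x_mul_pd_J {n : ℕ} (k : ℕ) (x : Fin n → ℝ) (hx : ∀ i, x i ≠ 0) (i : Fin n) :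
    x i * pd i (J k) x = sgnJ k (i : ℕ) * J k x := by
  rw [pd_J k x hx i]
  have hJx : J k x = (if (i : ℕ) < 2 * k then
        (if (i : ℕ) % 2 = 0 then x i else (x i)⁻¹) else 1)
      * ∏ j ∈ univ.erase i, (if (j : ℕ) < 2 * k then
        (if (j : ℕ) % 2 = 0 then x j else (x j)⁻¹) else 1) :=
    (Finset.mul_prod_erase univ _ (Finset.mem_univ i)).symm
  rw [hJx, sgnJ]
  by_cases h1 : (i : ℕ) < 2 * k <;> simp only [h1, if_true, if_false]
  · by_cases h2 : (i : ℕ) % 2 = 0 <;> simp only [h2, if_true, if_false]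
    · ring
    · have h : x i * (x i ^ 2)⁻¹ = (x i)⁻¹ := by
        rw [sq, mul_inv, ← mul_assoc, mul_inv_cancel₀ (hx i), one_mul]
      linear_combination
        (-(∏ j ∈ univ.erase i, if (j : ℕ) < 2 * k then
          (if (j : ℕ) % 2 = 0 then x j else (x j)⁻¹) else 1)) * h
  · ring

/-- with `a_1 = ⋯ = a_ℓ = 0`, `a_{ℓ+1} ≠ 0` and `λ = ⌊ℓ/2⌋`,
one has `{J_k, F_l} = 0` for `k ≤ λ < l` (n even, `F_l = v_{2l} I_l`). -/
theorem J_F_commute (n : ℕ) (hn : Even n) (a : Fin n → ℝ) (ℓ : ℕ) (hℓ : ℓ < n)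
    (hzero : ∀ m : Fin n, (m : ℕ) < ℓ → a m = 0)
    (hne : a ⟨ℓ, hℓ⟩ ≠ 0)
    (k l : ℕ) (hk1 : 1 ≤ k) (hk2 : k ≤ ℓ / 2) (hl1 : ℓ / 2 < l) (hl2 : l ≤ n / 2)
    (x : Fin n → ℝ) (hx : ∀ i, x i ≠ 0) :
    pb (J k) (fun y => v a (2 * l) y * Ifun l y) x = 0 := by
  set F : (Fin n → ℝ) → ℝ := fun y => v a (2 * l) y * Ifun l y with hF
  have hkℓ : 2 * k ≤ ℓ := by omega
  have hℓl : ℓ < 2 * l := by omega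
  -- Q vanishes in the J-support
  have hQ : ∀ i : Fin n, (i : ℕ) < 2 * k → pd i F x = 0 := by
    intro i hi
    rw [hF, pd_mul' (hasFDerivAt_v a (2*l) x) (hasFDerivAt_Ifun l x hx) i,
      pd_v a (2*l) x i, pd_Ifun l x hx i]
    have h1 : ¬ (2 * l ≤ (i : ℕ)) := by omega
    have h2 : (i : ℕ) < 2 * l := by omega
    have h3 : a i = 0 := hzero i (by omega)
    simp [h1, h2, h3]
  -- P vanishes outside the J-support
  have hP0 : ∀ i : Fin n, 2 * k ≤ (i : ℕ) → pd i (J k) x = 0 := by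
    intro i hi
    rw [pd_J k x hx i]
    have h1 : ¬ ((i : ℕ) < 2 * k) := by omega
    simp [h1]
  have hsgn0 : ∀ i : Fin n, 2 * k ≤ (i : ℕ) → sgnJ k (i : ℕ) = 0 := by
    intro i hi
    have h1 : ¬ ((i : ℕ) < 2 * k) := by omega
    simp [sgnJ, h1]
  -- each term of the bracket
  have hT : ∀ i j : Fin n,
      (if i < j then x i * x j * (pd i (J k) x * pd j F x - pd j (J k) x * pd i F x) else 0)
      = sgnJ k (i : ℕ) * (J k x * (x j * pd j F x)) := by
    intro i j
    by_cases hij : i < j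
    · rw [if_pos hij]
      by_cases hi : (i : ℕ) < 2 * k
      · by_cases hj : (j : ℕ) < 2 * k
        · rw [hQ i hi, hQ j hj]
          ring
        · rw [hQ i hi, hP0 j (le_of_not_gt hj)]
          have h := x_mul_pd_J k x hx i
          linear_combination (x j * pd j F x) * h
      · have hi' : 2 * k ≤ (i : ℕ) := le_of_not_gt hi
        have hj' : 2 * k ≤ (j : ℕ) := le_trans hi' (le_of_lt (Fin.lt_def.mp hij))
        rw [hP0 i hi', hP0 j hj', hsgn0 i hi']
        ring
    · rw [if_neg hij]
      by_cases hi : (i : ℕ) < 2 * k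
      · by_cases hj : (j : ℕ) < 2 * k
        · rw [hQ j hj]
          ring
        · exact absurd (Fin.lt_def.mpr (lt_of_lt_of_le hi (le_of_not_gt hj))) hij
      · rw [hsgn0 i (le_of_not_gt hi)]
        ring
  rw [pb]
  rw [Finset.sum_congr rfl (fun i _ => Finset.sum_congr rfl (fun j _ => hT i j))]
  simp only [← Finset.mul_sum]
  rw [← Finset.sum_mul, sgnJ_sum k n (by omega), zero_mul]
end

section
/- The Kahan map x̃_i = x_i (1 − εH)(1 + εH) / [(1 − εH + 2ε v_{i−1})(1 − εH + 2ε v_i)] satisfies the Kahan discretization equations x̃_i − x_i = ε x_i(H − ṽ_i − ṽ_{i−1}) + ε x̃_i(H − v_i − v_{i−1}), where ṽ_j = Σ_{k≤j} a_k x̃_k; moreover ṽ_j = v_j (1 + εH)/(1 − εH + 2ε v_j) and H̃ := ṽ_n = H. -/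
open Finset Real

/-- the Kahan map of the generalized Lotka–Volterra system -/
noncomputable def kahan {n : ℕ} (a : Fin n → ℝ) (ε : ℝ) (x : Fin n → ℝ) (i : Fin n) : ℝ :=
  x i * ((1 - ε * v a n x) * (1 + ε * v a n x)) /
    ((1 - ε * v a n x + 2 * ε * v a (i : ℕ) x)
      * (1 - ε * v a n x + 2 * ε * v a ((i : ℕ) + 1) x))

lemma v_succ {n : ℕ} (a x : Fin n → ℝ) (j : ℕ) (hj : j < n) :
    v a (j + 1) x = v a j x + a ⟨j, hj⟩ * x ⟨j, hj⟩ := by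
  unfold v
  have key : ∀ k : Fin n, (if (k : ℕ) < j + 1 then a k * x k else 0)
      = (if (k : ℕ) < j then a k * x k else 0)
        + (if k = ⟨j, hj⟩ then a k * x k else 0) := by
    intro k
    by_cases h1 : (k : ℕ) < j
    · have h2 : (k : ℕ) < j + 1 := by omega
      have hne : k ≠ ⟨j, hj⟩ := Fin.ne_of_val_ne (show (k:ℕ) ≠ j by omega)
      simp [h1, h2, hne]
    · by_cases h2 : (k : ℕ) = j
      · have heq : k = ⟨j, hj⟩ := Fin.ext h2
        simp [heq]
      · have h3 : ¬ (k : ℕ) < j + 1 := by omega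
        have hne : k ≠ ⟨j, hj⟩ := Fin.ne_of_val_ne (show (k:ℕ) ≠ j by omega)
        simp [h1, h3, hne]
  simp_rw [key, Finset.sum_add_distrib]
  simp

lemma kahan_alg1 (ε H vj aj xj : ℝ)
    (hd1 : 1 - ε * H + 2 * ε * vj ≠ 0)
    (hd2 : 1 - ε * H + 2 * ε * (vj + aj * xj) ≠ 0) :
    vj * (1 + ε * H) / (1 - ε * H + 2 * ε * vj)
      + aj * (xj * ((1 - ε * H) * (1 + ε * H)) /
          ((1 - ε * H + 2 * ε * vj) * (1 - ε * H + 2 * ε * (vj + aj * xj))))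
    = (vj + aj * xj) * (1 + ε * H) / (1 - ε * H + 2 * ε * (vj + aj * xj)) := by
  generalize hD1 : 1 - ε * H + 2 * ε * vj = D1 at *
  generalize hD2 : 1 - ε * H + 2 * ε * (vj + aj * xj) = D2 at *
  field_simp
  subst hD1 hD2
  ring

lemma kahan_alg2 (ε H vi vi1 xi : ℝ)
    (hd1 : 1 - ε * H + 2 * ε * vi ≠ 0)
    (hd2 : 1 - ε * H + 2 * ε * vi1 ≠ 0) :
    xi * ((1 - ε * H) * (1 + ε * H)) / ((1 - ε * H + 2 * ε * vi) * (1 - ε * H + 2 * ε * vi1))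
        - xi =
      ε * xi * (H - vi1 * (1 + ε * H) / (1 - ε * H + 2 * ε * vi1)
                  - vi * (1 + ε * H) / (1 - ε * H + 2 * ε * vi))
      + ε * (xi * ((1 - ε * H) * (1 + ε * H)) /
            ((1 - ε * H + 2 * ε * vi) * (1 - ε * H + 2 * ε * vi1))) * (H - vi1 - vi) := by
  generalize hD1 : 1 - ε * H + 2 * ε * vi = D1 at *
  generalize hD2 : 1 - ε * H + 2 * ε * vi1 = D2 at *
  field_simp
  subst hD1 hD2
  ring

/-- the Kahan map satisfies the Kahan discretization equations,
`ṽ_j = v_j (1 + εH)/(1 − εH + 2ε v_j)`, and preserves `H`. -/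
theorem kahan_discretization (n : ℕ) (a : Fin n → ℝ) (ε : ℝ) (hε : 0 < ε)
    (x : Fin n → ℝ)
    (hden : ∀ j : ℕ, j ≤ n → 1 - ε * v a n x + 2 * ε * v a j x ≠ 0)
    (hH : 1 - ε ^ 2 * (v a n x) ^ 2 ≠ 0) :
    (∀ j : ℕ, j ≤ n → v a j (kahan a ε x) =
      v a j x * (1 + ε * v a n x) / (1 - ε * v a n x + 2 * ε * v a j x)) ∧
    v a n (kahan a ε x) = v a n x ∧
    (∀ i : Fin n, kahan a ε x i - x i =
      ε * x i * (v a n x - v a ((i : ℕ) + 1) (kahan a ε x) - v a (i : ℕ) (kahan a ε x))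
      + ε * kahan a ε x i * (v a n x - v a ((i : ℕ) + 1) x - v a (i : ℕ) x)) := by
  have hfac : (1 - ε * v a n x) * (1 + ε * v a n x) ≠ 0 := by
    have h : 1 - ε ^ 2 * (v a n x) ^ 2 = (1 - ε * v a n x) * (1 + ε * v a n x) := by ring
    rw [← h]; exact hH
  have hplus : 1 + ε * v a n x ≠ 0 := fun h => hfac (by rw [h]; ring)
  have claim1 : ∀ j : ℕ, j ≤ n → v a j (kahan a ε x) =
      v a j x * (1 + ε * v a n x) / (1 - ε * v a n x + 2 * ε * v a j x) := by
    intro j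
    induction j with
    | zero => intro _; simp [v]
    | succ j ih =>
      intro hj
      have hjn : j < n := hj
      have d1 := hden j hjn.le
      have d2 := hden (j + 1) hj
      rw [v_succ a x j hjn] at d2
      have hk : kahan a ε x ⟨j, hjn⟩ =
          x ⟨j, hjn⟩ * ((1 - ε * v a n x) * (1 + ε * v a n x)) /
            ((1 - ε * v a n x + 2 * ε * v a j x)
              * (1 - ε * v a n x + 2 * ε * (v a j x + a ⟨j, hjn⟩ * x ⟨j, hjn⟩))) := by
        simp only [kahan, Fin.val_mk]
        rw [v_succ a x j hjn]
      rw [v_succ a (kahan a ε x) j hjn, v_succ a x j hjn, ih hjn.le, hk]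
      exact kahan_alg1 ε (v a n x) (v a j x) (a ⟨j, hjn⟩) (x ⟨j, hjn⟩) d1 d2
  have claim2 : v a n (kahan a ε x) = v a n x := by
    rw [claim1 n le_rfl]
    have h : 1 - ε * v a n x + 2 * ε * v a n x = 1 + ε * v a n x := by ring
    rw [h, mul_div_assoc, div_self hplus, mul_one]
  refine ⟨claim1, claim2, ?_⟩
  intro i
  have hi1 : (i : ℕ) ≤ n := i.isLt.le
  have hi2 : (i : ℕ) + 1 ≤ n := i.isLt
  have d1 := hden i hi1
  have d2 := hden ((i : ℕ) + 1) hi2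
  have hk : kahan a ε x i =
      x i * ((1 - ε * v a n x) * (1 + ε * v a n x)) /
        ((1 - ε * v a n x + 2 * ε * v a (i : ℕ) x)
          * (1 - ε * v a n x + 2 * ε * v a ((i : ℕ) + 1) x)) := by
    simp only [kahan]
  rw [claim1 _ hi1, claim1 _ hi2, hk]
  exact kahan_alg2 ε (v a n x) (v a (i : ℕ) x) (v a ((i : ℕ) + 1) x) (x i) d1 d2
end
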